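/- (Theorem 2) Assume 0 < α < 1, 0 < β < 1, a > 0, b > 0, c > 0, and that ‖f_i‖ ≤ c, ‖w_j‖ ≤ c, ‖u_k‖ ≤ c for all i, j, k. Assume that for every i: the within-coarse-class instance probability satisfies P_I^C(i) ≥ α, the coarse probability satisfies P_C(i) ≥ β, the within-coarse residual satisfies ∑_{j : y^C(j) = y^C(i), j ≠ i} exp(⟪f_i, w_j⟫) ≥ a, and ∑_{k ≠ y^C(i)} exp(⟪f_i, u_k⟫) ≥ b. Set A = 2c² − 2 log(aα/(1−α)), B = 2c² − 2 log(bβ/(1−β)), c' = exp(2c(√A + √B)), and for each i let M_i = #{ j ∈ {1,…,n} : y^C(j) ≠ y^C(i) } and α'_i = 1 / ( 1/α + (1−β) c' M_i / β ). Then for every i, the fine-class probability satisfies P_F(i) ≥ α'_i · z · exp( −(2c(z−1)/z) ( √(2c² − 2 log(aα'_i/(1−α'_i))) + √B ) ). -/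

import Mathlib

open Finset Real
open scoped RealInnerProductSpace BigOperators

lemma aux_dist {d : ℕ} (x y : EuclideanSpace ℝ (Fin d)) {c t : ℝ} (ht : 0 < t)
    (hx : ‖x‖ ≤ c) (hy : ‖y‖ ≤ c) (hip : t ≤ Real.exp ⟪x, y⟫) :
    ‖x - y‖ ≤ Real.sqrt (2 * c ^ 2 - 2 * Real.log t) := by
  have hlog : Real.log t ≤ ⟪x, y⟫ := (Real.log_le_iff_le_exp ht).2 hip
  have hsq : ‖x - y‖ ^ 2 ≤ 2 * c ^ 2 - 2 * Real.log t := by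
    have h := norm_sub_sq_real x y
    nlinarith [norm_nonneg x, norm_nonneg y]
  exact (Real.le_sqrt (norm_nonneg _) ((sq_nonneg _).trans hsq)).2 hsq

lemma aux_inner_shift {d : ℕ} (x p q : EuclideanSpace ℝ (Fin d)) {c r : ℝ}
    (hx : ‖x‖ ≤ c) (hc : 0 ≤ c) (hr : ‖p - q‖ ≤ r) :
    ⟪x, p⟫ ≤ ⟪x, q⟫ + c * r := by
  have h1 : ⟪x, p - q⟫ ≤ ‖x‖ * ‖p - q‖ := real_inner_le_norm x (p - q)
  have h2 : ‖x‖ * ‖p - q‖ ≤ c * r := mul_le_mul hx hr (norm_nonneg _) hc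
  have h3 : ⟪x, p⟫ = ⟪x, q⟫ + ⟪x, p - q⟫ := by rw [inner_sub_right]; ring
  linarith

lemma aux_exp_shift {d : ℕ} (x p q : EuclideanSpace ℝ (Fin d)) {c r : ℝ}
    (hx : ‖x‖ ≤ c) (hc : 0 ≤ c) (hr : ‖p - q‖ ≤ r) :
    Real.exp ⟪x, p⟫ ≤ Real.exp ⟪x, q⟫ * Real.exp (c * r) := by
  rw [← Real.exp_add, Real.exp_le_exp]
  exact aux_inner_shift x p q hx hc hr

lemma aux_extract {e R a α : ℝ} (hα : 0 < α) (hα1 : α < 1) (ha : 0 < a)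
    (haR : a ≤ R) (h : α * (e + R) ≤ e) : a * α / (1 - α) ≤ e := by
  rw [div_le_iff₀ (by linarith)]; nlinarith

set_option maxHeartbeats 800000 in
/-- Theorem 2: under within-coarse-class instance guarantees and coarse
guarantees, for every `i` the fine-class probability satisfies
`P_F(i) ≥ α'_i · z · exp(−(2c(z−1)/z)(√(2c² − 2 log(aα'_i/(1−α'_i))) + √B))` where
`α'_i = 1 / (1/α + (1−β) c' M_i / β)`, `c' = exp(2c(√A + √B))`,
`A = 2c² − 2 log(aα/(1−α))`, `B = 2c² − 2 log(bβ/(1−β))`, and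
`M_i = #{j : y^C(j) ≠ y^C(i)}`. -/
theorem theorem2_fine_prob_lower_bound
    {d n F C z : ℕ} (hz : 0 < z) (hzF : z * F = n)
    (f w : Fin n → EuclideanSpace ℝ (Fin d))
    (yF : Fin n → Fin F)
    (hcard : ∀ s : Fin F, (Finset.univ.filter (fun j => yF j = s)).card = z)
    (wbar : Fin F → EuclideanSpace ℝ (Fin d))
    (hwbar : ∀ s : Fin F,
      wbar s = (z : ℝ)⁻¹ • ∑ j ∈ Finset.univ.filter (fun j => yF j = s), w j)
    (yC : Fin n → Fin C)
    (hcompat : ∀ i j : Fin n, yF i = yF j → yC i = yC j)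
    (u : Fin C → EuclideanSpace ℝ (Fin d))
    (PI PIC PC PF : Fin n → ℝ)
    (hPI : ∀ i, PI i = Real.exp ⟪f i, w i⟫ / ∑ j, Real.exp ⟪f i, w j⟫)
    (hPIC : ∀ i, PIC i = Real.exp ⟪f i, w i⟫ /
      ∑ j ∈ Finset.univ.filter (fun j => yC j = yC i), Real.exp ⟪f i, w j⟫)
    (hPC : ∀ i, PC i = Real.exp ⟪f i, u (yC i)⟫ / ∑ k, Real.exp ⟪f i, u k⟫)
    (hPF : ∀ i, PF i = Real.exp ⟪f i, wbar (yF i)⟫ / ∑ s, Real.exp ⟪f i, wbar s⟫)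
    (α β a b c : ℝ)
    (hα : 0 < α) (hα1 : α < 1) (hβ : 0 < β) (hβ1 : β < 1)
    (ha : 0 < a) (hb : 0 < b) (hc : 0 < c)
    (hfnorm : ∀ i, ‖f i‖ ≤ c) (hwnorm : ∀ j, ‖w j‖ ≤ c) (hunorm : ∀ k, ‖u k‖ ≤ c)
    (hPICα : ∀ i, PIC i ≥ α) (hPCβ : ∀ i, PC i ≥ β)
    (hresI : ∀ i, ∑ j ∈ Finset.univ.filter (fun j => yC j = yC i ∧ j ≠ i),
      Real.exp ⟪f i, w j⟫ ≥ a)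
    (hresC : ∀ i, ∑ k ∈ Finset.univ.filter (fun k => k ≠ yC i), Real.exp ⟪f i, u k⟫ ≥ b)
    (A B c' : ℝ)
    (hA : A = 2 * c ^ 2 - 2 * Real.log (a * α / (1 - α)))
    (hB : B = 2 * c ^ 2 - 2 * Real.log (b * β / (1 - β)))
    (hc' : c' = Real.exp (2 * c * (Real.sqrt A + Real.sqrt B)))
    (M : Fin n → ℕ)
    (hM : ∀ i, M i = (Finset.univ.filter (fun j => yC j ≠ yC i)).card)
    (α' : Fin n → ℝ)
    (hα' : ∀ i, α' i = 1 / (1 / α + (1 - β) * c' * (M i : ℝ) / β)) :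
    ∀ i : Fin n,
      PF i ≥ α' i * (z : ℝ) *
        Real.exp (-(2 * c * ((z : ℝ) - 1) / (z : ℝ)) *
          (Real.sqrt (2 * c ^ 2 - 2 * Real.log (a * α' i / (1 - α' i))) +
            Real.sqrt B)) := by
  have hc0 : (0:ℝ) ≤ c := le_of_lt hc
  have h1α : (0:ℝ) < 1 - α := by linarith
  have h1β : (0:ℝ) < 1 - β := by linarith
  have htα : 0 < a * α / (1 - α) := by positivity
  have htβ : 0 < b * β / (1 - β) := by positivity
  -- per-example lower bound on exp⟪f j, w j⟫
  have hew : ∀ j, a * α / (1 - α) ≤ Real.exp ⟪f j, w j⟫ := by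
    intro j
    set Rj := ∑ k ∈ Finset.univ.filter (fun k => yC k = yC j ∧ k ≠ j),
      Real.exp ⟪f j, w k⟫ with hRj
    have hfe : Finset.univ.filter (fun k => yC k = yC j ∧ k ≠ j)
        = (Finset.univ.filter (fun k => yC k = yC j)).erase j := by
      ext k; simp [Finset.mem_erase, and_comm]
    have hmem : j ∈ Finset.univ.filter (fun k => yC k = yC j) := by simp
    have hsplit : ∑ k ∈ Finset.univ.filter (fun k => yC k = yC j),
        Real.exp ⟪f j, w k⟫ = Real.exp ⟪f j, w j⟫ + Rj := by
      rw [hRj, hfe]; exact (Finset.add_sum_erase _ _ hmem).symm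
    have hR : a ≤ Rj := hresI j
    have hden : 0 < Real.exp ⟪f j, w j⟫ + Rj := by
      have := Real.exp_pos ⟪f j, w j⟫; linarith
    have hmain : α * (Real.exp ⟪f j, w j⟫ + Rj) ≤ Real.exp ⟪f j, w j⟫ := by
      have h1 := hPICα j
      rw [hPIC j, hsplit] at h1
      rw [ge_iff_le, le_div_iff₀ hden] at h1
      linarith
    exact aux_extract hα hα1 ha hR hmain
  -- per-example lower bound on exp⟪f j, u (yC j)⟫
  have heu : ∀ j, b * β / (1 - β) ≤ Real.exp ⟪f j, u (yC j)⟫ := by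
    intro j
    set Rj := ∑ k ∈ Finset.univ.filter (fun k => k ≠ yC j),
      Real.exp ⟪f j, u k⟫ with hRj
    have hfe : Finset.univ.filter (fun k => k ≠ yC j)
        = Finset.univ.erase (yC j) := Finset.filter_ne' _ _
    have hsplit : ∑ k, Real.exp ⟪f j, u k⟫ = Real.exp ⟪f j, u (yC j)⟫ + Rj := by
      rw [hRj, hfe]; exact (Finset.add_sum_erase _ _ (Finset.mem_univ _)).symm
    have hR : b ≤ Rj := hresC j
    have hden : 0 < Real.exp ⟪f j, u (yC j)⟫ + Rj := by
      have := Real.exp_pos ⟪f j, u (yC j)⟫; linarith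
    have hmain : β * (Real.exp ⟪f j, u (yC j)⟫ + Rj) ≤ Real.exp ⟪f j, u (yC j)⟫ := by
      have h1 := hPCβ j
      rw [hPC j, hsplit] at h1
      rw [ge_iff_le, le_div_iff₀ hden] at h1
      linarith
    exact aux_extract hβ hβ1 hb hR hmain
  have hfwA : ∀ j, ‖f j - w j‖ ≤ Real.sqrt A := by
    intro j; rw [hA]; exact aux_dist _ _ htα (hfnorm j) (hwnorm j) (hew j)
  have hfuB : ∀ j, ‖f j - u (yC j)‖ ≤ Real.sqrt B := by
    intro j; rw [hB]; exact aux_dist _ _ htβ (hfnorm j) (hunorm (yC j)) (heu j)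
  have hwu : ∀ j, ‖w j - u (yC j)‖ ≤ Real.sqrt A + Real.sqrt B := by
    intro j
    calc ‖w j - u (yC j)‖ ≤ ‖w j - f j‖ + ‖f j - u (yC j)‖ :=
          norm_sub_le_norm_sub_add_norm_sub _ _ _
      _ ≤ Real.sqrt A + Real.sqrt B := by
          rw [norm_sub_rev]; exact add_le_add (hfwA j) (hfuB j)
  intro i
  have hei : (0:ℝ) < Real.exp ⟪f i, w i⟫ := Real.exp_pos _
  -- within-coarse sum bound
  have hSCpos : 0 < ∑ j ∈ Finset.univ.filter (fun j => yC j = yC i),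
      Real.exp ⟪f i, w j⟫ := by
    apply Finset.sum_pos (fun j _ => Real.exp_pos _)
    exact ⟨i, by simp⟩
  have hSCle : ∑ j ∈ Finset.univ.filter (fun j => yC j = yC i),
      Real.exp ⟪f i, w j⟫ ≤ Real.exp ⟪f i, w i⟫ / α := by
    have h1 := hPICα i
    rw [hPIC i, ge_iff_le, le_div_iff₀ hSCpos] at h1
    rw [le_div_iff₀ hα]; linarith
  -- cross-coarse single-term bound
  have hK : c' = Real.exp (c * (Real.sqrt A + Real.sqrt B)) *
      Real.exp (c * (Real.sqrt A + Real.sqrt B)) := by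
    rw [hc', ← Real.exp_add]; ring_nf
  have hKpos : 0 < Real.exp (c * (Real.sqrt A + Real.sqrt B)) := Real.exp_pos _
  have hcross : ∀ j, yC j ≠ yC i → Real.exp ⟪f i, w j⟫ ≤
      (1 - β) / β * c' * Real.exp ⟪f i, w i⟫ := by
    intro j hj
    have h1 : Real.exp ⟪f i, w j⟫ ≤ Real.exp ⟪f i, u (yC j)⟫ *
        Real.exp (c * (Real.sqrt A + Real.sqrt B)) :=
      aux_exp_shift _ _ _ (hfnorm i) hc0 (hwu j)
    have h2 : Real.exp ⟪f i, u (yC j)⟫ ≤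
        ∑ k ∈ Finset.univ.filter (fun k => k ≠ yC i), Real.exp ⟪f i, u k⟫ := by
      exact Finset.single_le_sum (f := fun k => Real.exp ⟪f i, u k⟫)
        (fun k _ => le_of_lt (Real.exp_pos _)) (by simp [hj])
    have h3 : ∑ k ∈ Finset.univ.filter (fun k => k ≠ yC i), Real.exp ⟪f i, u k⟫ ≤
        (1 - β) / β * Real.exp ⟪f i, u (yC i)⟫ := by
      set Rj := ∑ k ∈ Finset.univ.filter (fun k => k ≠ yC i),
        Real.exp ⟪f i, u k⟫ with hRj
      have hsplit : ∑ k, Real.exp ⟪f i, u k⟫ = Real.exp ⟪f i, u (yC i)⟫ + Rj := by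
        rw [hRj, Finset.filter_ne']; exact (Finset.add_sum_erase _ _ (Finset.mem_univ _)).symm
      have hRpos : b ≤ Rj := hresC i
      have hden : 0 < Real.exp ⟪f i, u (yC i)⟫ + Rj := by
        have := Real.exp_pos ⟪f i, u (yC i)⟫; linarith
      have h4 := hPCβ i
      rw [hPC i, hsplit, ge_iff_le, le_div_iff₀ hden] at h4
      rw [hRj, div_mul_eq_mul_div, le_div_iff₀ hβ]; nlinarith
    have h4 : Real.exp ⟪f i, u (yC i)⟫ ≤ Real.exp ⟪f i, w i⟫ *
        Real.exp (c * (Real.sqrt A + Real.sqrt B)) := by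
      apply aux_exp_shift _ _ _ (hfnorm i) hc0
      rw [norm_sub_rev]; exact hwu i
    have hbb : (0:ℝ) ≤ (1 - β) / β := by positivity
    calc Real.exp ⟪f i, w j⟫
        ≤ Real.exp ⟪f i, u (yC j)⟫ * Real.exp (c * (Real.sqrt A + Real.sqrt B)) := h1
      _ ≤ ((1 - β) / β * Real.exp ⟪f i, u (yC i)⟫) *
            Real.exp (c * (Real.sqrt A + Real.sqrt B)) := by
          apply mul_le_mul_of_nonneg_right (le_trans h2 h3) (le_of_lt hKpos)
      _ ≤ ((1 - β) / β * (Real.exp ⟪f i, w i⟫ *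
            Real.exp (c * (Real.sqrt A + Real.sqrt B)))) *
            Real.exp (c * (Real.sqrt A + Real.sqrt B)) := by
          apply mul_le_mul_of_nonneg_right _ (le_of_lt hKpos)
          exact mul_le_mul_of_nonneg_left h4 hbb
      _ = (1 - β) / β * c' * Real.exp ⟪f i, w i⟫ := by rw [hK]; ring
  -- cross-coarse sum bound
  have hScross : ∑ j ∈ Finset.univ.filter (fun j => yC j ≠ yC i),
      Real.exp ⟪f i, w j⟫ ≤
      (M i : ℝ) * ((1 - β) / β * c' * Real.exp ⟪f i, w i⟫) := by
    have h := Finset.sum_le_card_nsmul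
      (Finset.univ.filter (fun j => yC j ≠ yC i))
      (fun j => Real.exp ⟪f i, w j⟫)
      ((1 - β) / β * c' * Real.exp ⟪f i, w i⟫)
      (fun j hjmem => hcross j (by simpa using hjmem))
    rw [nsmul_eq_mul] at h
    rw [hM i]; exact h
  -- total sum bound
  have hc'pos : 0 < c' := by rw [hc']; exact Real.exp_pos _
  have hSsplit : ∑ j, Real.exp ⟪f i, w j⟫ =
      (∑ j ∈ Finset.univ.filter (fun j => yC j = yC i), Real.exp ⟪f i, w j⟫) +
      ∑ j ∈ Finset.univ.filter (fun j => yC j ≠ yC i), Real.exp ⟪f i, w j⟫ :=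
    (Finset.sum_filter_add_sum_filter_not _ _ _).symm
  have hSpos : 0 < ∑ j, Real.exp ⟪f i, w j⟫ :=
    Finset.sum_pos (fun j _ => Real.exp_pos _) ⟨i, Finset.mem_univ i⟩
  have hSle : ∑ j, Real.exp ⟪f i, w j⟫ ≤
      Real.exp ⟪f i, w i⟫ * (1 / α + (1 - β) * c' * (M i : ℝ) / β) := by
    rw [hSsplit]
    have e1 : Real.exp ⟪f i, w i⟫ / α = Real.exp ⟪f i, w i⟫ * (1 / α) := by ring
    have e2 : (M i : ℝ) * ((1 - β) / β * c' * Real.exp ⟪f i, w i⟫) =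
        Real.exp ⟪f i, w i⟫ * ((1 - β) * c' * (M i : ℝ) / β) := by
      field_simp
    calc _ ≤ Real.exp ⟪f i, w i⟫ / α +
          (M i : ℝ) * ((1 - β) / β * c' * Real.exp ⟪f i, w i⟫) :=
          add_le_add hSCle hScross
      _ = _ := by rw [e1, e2]; ring
  -- α' facts
  have htpos : (0:ℝ) ≤ (1 - β) * c' * (M i : ℝ) / β := by positivity
  have hKden : (0:ℝ) < 1 / α + (1 - β) * c' * (M i : ℝ) / β := by positivity
  have hα'pos : 0 < α' i := by rw [hα' i]; positivity
  have hα'le : α' i ≤ α := by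
    rw [hα' i]
    calc 1 / (1 / α + (1 - β) * c' * (M i : ℝ) / β) ≤ 1 / (1 / α) := by
          apply one_div_le_one_div_of_le (by positivity) (by linarith)
      _ = α := one_div_one_div α
  have hα'lt1 : α' i < 1 := lt_of_le_of_lt hα'le hα1
  have h1α' : (0:ℝ) < 1 - α' i := by linarith
  have hα'inv : α' i * (1 / α + (1 - β) * c' * (M i : ℝ) / β) = 1 := by
    rw [hα' i]; field_simp
  -- global instance probability bound: α' i * S ≤ e_i
  have hPIge : α' i * (∑ j, Real.exp ⟪f i, w j⟫) ≤ Real.exp ⟪f i, w i⟫ := by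
    calc α' i * (∑ j, Real.exp ⟪f i, w j⟫)
        ≤ α' i * (Real.exp ⟪f i, w i⟫ * (1 / α + (1 - β) * c' * (M i : ℝ) / β)) :=
          mul_le_mul_of_nonneg_left hSle (le_of_lt hα'pos)
      _ = Real.exp ⟪f i, w i⟫ * (α' i * (1 / α + (1 - β) * c' * (M i : ℝ) / β)) := by
          ring
      _ = Real.exp ⟪f i, w i⟫ := by rw [hα'inv, mul_one]
  -- refined lower bound on e_i using α'
  have htα' : 0 < a * α' i / (1 - α' i) := by positivity
  have heiα' : a * α' i / (1 - α' i) ≤ Real.exp ⟪f i, w i⟫ := by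
    have hfe : Finset.univ.filter (fun k => (k:Fin n) ≠ i) = Finset.univ.erase i :=
      Finset.filter_ne' _ _
    have hsplit : ∑ j, Real.exp ⟪f i, w j⟫ = Real.exp ⟪f i, w i⟫ +
        ∑ j ∈ Finset.univ.erase i, Real.exp ⟪f i, w j⟫ :=
      (Finset.add_sum_erase _ _ (Finset.mem_univ i)).symm
    have hsub : Finset.univ.filter (fun j => yC j = yC i ∧ j ≠ i) ⊆
        Finset.univ.erase i := by
      intro k hk; simp only [Finset.mem_filter] at hk
      simp [Finset.mem_erase, hk.2.2]
    have hR : a ≤ ∑ j ∈ Finset.univ.erase i, Real.exp ⟪f i, w j⟫ := by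
      refine le_trans (hresI i) ?_
      exact Finset.sum_le_sum_of_subset_of_nonneg hsub
        (fun j _ _ => le_of_lt (Real.exp_pos _))
    have hmain : α' i * (Real.exp ⟪f i, w i⟫ +
        ∑ j ∈ Finset.univ.erase i, Real.exp ⟪f i, w j⟫) ≤ Real.exp ⟪f i, w i⟫ := by
      rw [← hsplit]; exact hPIge
    exact aux_extract hα'pos hα'lt1 ha hR hmain
  -- distance bound with A'
  set A' : ℝ := 2 * c ^ 2 - 2 * Real.log (a * α' i / (1 - α' i)) with hA'
  have hfwA' : ‖f i - w i‖ ≤ Real.sqrt A' :=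
    aux_dist _ _ htα' (hfnorm i) (hwnorm i) heiα'
  have hAA' : Real.sqrt A ≤ Real.sqrt A' := by
    apply Real.sqrt_le_sqrt
    rw [hA, hA']
    have hlog : Real.log (a * α' i / (1 - α' i)) ≤ Real.log (a * α / (1 - α)) := by
      apply Real.log_le_log htα'
      apply div_le_div₀ (by positivity) (mul_le_mul_of_nonneg_left hα'le (le_of_lt ha)) h1α (by linarith)
    linarith
  set Q : ℝ := Real.sqrt A' + Real.sqrt B with hQ
  have hQ0 : 0 ≤ Q := by rw [hQ]; positivity
  -- same fine class weight distance
  have hww : ∀ j, yF j = yF i → ‖w j - w i‖ ≤ 2 * Q := by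
    intro j hj
    have hcc : yC j = yC i := hcompat j i hj
    have h1 : ‖w j - u (yC i)‖ ≤ Real.sqrt A + Real.sqrt B := by
      rw [← hcc]; exact hwu j
    have h2 : ‖u (yC i) - w i‖ ≤ Real.sqrt B + Real.sqrt A' := by
      calc ‖u (yC i) - w i‖ ≤ ‖u (yC i) - f i‖ + ‖f i - w i‖ :=
            norm_sub_le_norm_sub_add_norm_sub _ _ _
        _ ≤ Real.sqrt B + Real.sqrt A' := by
            rw [norm_sub_rev]; exact add_le_add (hfuB i) hfwA'
    calc ‖w j - w i‖ ≤ ‖w j - u (yC i)‖ + ‖u (yC i) - w i‖ :=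
          norm_sub_le_norm_sub_add_norm_sub _ _ _
      _ ≤ (Real.sqrt A + Real.sqrt B) + (Real.sqrt B + Real.sqrt A') :=
          add_le_add h1 h2
      _ ≤ 2 * Q := by rw [hQ]; linarith
  -- inner product lower bound within fine class
  have hinner_j : ∀ j, yF j = yF i →
      ⟪f i, w i⟫ - 2 * c * Q ≤ ⟪f i, w j⟫ := by
    intro j hj
    have h1 : ⟪f i, w i⟫ ≤ ⟪f i, w j⟫ + c * (2 * Q) := by
      apply aux_inner_shift _ _ _ (hfnorm i) hc0
      rw [norm_sub_rev]; exact hww j hj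
    linarith
  -- class of i
  have himem : i ∈ Finset.univ.filter (fun j => yF j = yF i) := by simp
  have hzR : (0:ℝ) < (z:ℝ) := by exact_mod_cast hz
  have hz1 : 1 ≤ z := hz
  -- numerator bound
  have hbar_eq : ∀ s, ⟪f i, wbar s⟫ = (z:ℝ)⁻¹ *
      ∑ j ∈ Finset.univ.filter (fun j => yF j = s), ⟪f i, w j⟫ := by
    intro s
    rw [hwbar s, real_inner_smul_right, inner_sum]
  have hsum_ge : (z:ℝ) * ⟪f i, w i⟫ - ((z:ℝ) - 1) * (2 * c * Q) ≤
      ∑ j ∈ Finset.univ.filter (fun j => yF j = yF i), ⟪f i, w j⟫ := by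
    have hsplit : ∑ j ∈ Finset.univ.filter (fun j => yF j = yF i), ⟪f i, w j⟫ =
        ⟪f i, w i⟫ + ∑ j ∈ (Finset.univ.filter (fun j => yF j = yF i)).erase i,
          ⟪f i, w j⟫ :=
      (Finset.add_sum_erase _ _ himem).symm
    have hcarde : ((Finset.univ.filter (fun j => yF j = yF i)).erase i).card
        = z - 1 := by
      rw [Finset.card_erase_of_mem himem, hcard (yF i)]
    have hge := Finset.card_nsmul_le_sum
      ((Finset.univ.filter (fun j => yF j = yF i)).erase i)
      (fun j => ⟪f i, w j⟫) (⟪f i, w i⟫ - 2 * c * Q)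
      (fun j hjmem => by
        have hjf : yF j = yF i := by
          have := Finset.mem_of_mem_erase hjmem
          simpa using this
        exact hinner_j j hjf)
    rw [hcarde, nsmul_eq_mul] at hge
    have hcast : ((z - 1 : ℕ) : ℝ) = (z:ℝ) - 1 := by
      rw [Nat.cast_sub hz1]; simp
    rw [hcast] at hge
    have hid : (z:ℝ) * ⟪f i, w i⟫ - ((z:ℝ) - 1) * (2 * c * Q) =
        ⟪f i, w i⟫ + ((z:ℝ) - 1) * (⟪f i, w i⟫ - 2 * c * Q) := by ring
    rw [hsplit, hid]
    exact add_le_add_right hge _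
  have hnum : Real.exp ⟪f i, w i⟫ *
      Real.exp (-(2 * c * ((z:ℝ) - 1) / (z:ℝ)) * Q) ≤
      Real.exp ⟪f i, wbar (yF i)⟫ := by
    rw [← Real.exp_add, Real.exp_le_exp, hbar_eq (yF i)]
    have h1 : (z:ℝ)⁻¹ * ((z:ℝ) * ⟪f i, w i⟫ - ((z:ℝ) - 1) * (2 * c * Q)) ≤
        (z:ℝ)⁻¹ * ∑ j ∈ Finset.univ.filter (fun j => yF j = yF i), ⟪f i, w j⟫ :=
      mul_le_mul_of_nonneg_left hsum_ge (by positivity)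
    have h2 : (z:ℝ)⁻¹ * ((z:ℝ) * ⟪f i, w i⟫ - ((z:ℝ) - 1) * (2 * c * Q)) =
        ⟪f i, w i⟫ + -(2 * c * ((z:ℝ) - 1) / (z:ℝ)) * Q := by
      field_simp; ring
    linarith
  -- denominator bound (Jensen)
  have hden_le : ∑ s, Real.exp ⟪f i, wbar s⟫ ≤
      (∑ j, Real.exp ⟪f i, w j⟫) / (z:ℝ) := by
    have hjensen : ∀ s, Real.exp ⟪f i, wbar s⟫ ≤
        (z:ℝ)⁻¹ * ∑ j ∈ Finset.univ.filter (fun j => yF j = s),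
          Real.exp ⟪f i, w j⟫ := by
      intro s
      have hJ := convexOn_exp.map_sum_le
        (t := Finset.univ.filter (fun j => yF j = s))
        (w := fun _ => (z:ℝ)⁻¹) (p := fun j => ⟪f i, w j⟫)
        (fun j _ => by positivity)
        (by rw [Finset.sum_const, hcard s, nsmul_eq_mul]
            field_simp)
        (fun j _ => Set.mem_univ _)
      have hlhs : ∑ j ∈ Finset.univ.filter (fun j => yF j = s),
          (z:ℝ)⁻¹ • ⟪f i, w j⟫ = ⟪f i, wbar s⟫ := by
        rw [hbar_eq s, Finset.mul_sum]
        simp [smul_eq_mul]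
      rw [hlhs] at hJ
      calc Real.exp ⟪f i, wbar s⟫ ≤ ∑ j ∈ Finset.univ.filter (fun j => yF j = s),
            (z:ℝ)⁻¹ * Real.exp ⟪f i, w j⟫ := hJ
        _ = (z:ℝ)⁻¹ * ∑ j ∈ Finset.univ.filter (fun j => yF j = s),
            Real.exp ⟪f i, w j⟫ := by rw [Finset.mul_sum]
    calc ∑ s, Real.exp ⟪f i, wbar s⟫
        ≤ ∑ s, (z:ℝ)⁻¹ * ∑ j ∈ Finset.univ.filter (fun j => yF j = s),
            Real.exp ⟪f i, w j⟫ := Finset.sum_le_sum (fun s _ => hjensen s)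
      _ = (z:ℝ)⁻¹ * ∑ s, ∑ j ∈ Finset.univ.filter (fun j => yF j = s),
            Real.exp ⟪f i, w j⟫ := by rw [Finset.mul_sum]
      _ = (z:ℝ)⁻¹ * ∑ j, Real.exp ⟪f i, w j⟫ := by
          rw [Finset.sum_fiberwise]
      _ = (∑ j, Real.exp ⟪f i, w j⟫) / (z:ℝ) := by ring
  have hden_pos : 0 < ∑ s, Real.exp ⟪f i, wbar s⟫ :=
    Finset.sum_pos (fun s _ => Real.exp_pos _) ⟨yF i, Finset.mem_univ _⟩
  -- final assembly
  rw [hPF i, ge_iff_le]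
  set X : ℝ := -(2 * c * ((z:ℝ) - 1) / (z:ℝ)) * Q with hX
  have hXpos : 0 < Real.exp X := Real.exp_pos _
  have hSz : 0 < (∑ j, Real.exp ⟪f i, w j⟫) / (z:ℝ) := by positivity
  have step1 : α' i * (z:ℝ) * Real.exp X ≤
      (Real.exp ⟪f i, w i⟫ * Real.exp X) / ((∑ j, Real.exp ⟪f i, w j⟫) / (z:ℝ)) := by
    rw [le_div_iff₀ hSz]
    have heq : α' i * (z:ℝ) * Real.exp X * ((∑ j, Real.exp ⟪f i, w j⟫) / (z:ℝ)) =
        (α' i * (∑ j, Real.exp ⟪f i, w j⟫)) * Real.exp X := by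
      field_simp
    rw [heq]
    exact mul_le_mul_of_nonneg_right hPIge (le_of_lt hXpos)
  have step2 : (Real.exp ⟪f i, w i⟫ * Real.exp X) /
      ((∑ j, Real.exp ⟪f i, w j⟫) / (z:ℝ)) ≤
      Real.exp ⟪f i, wbar (yF i)⟫ / ((∑ j, Real.exp ⟪f i, w j⟫) / (z:ℝ)) :=
    div_le_div_of_nonneg_right hnum hSz.le
  have step3 : Real.exp ⟪f i, wbar (yF i)⟫ / ((∑ j, Real.exp ⟪f i, w j⟫) / (z:ℝ)) ≤
      Real.exp ⟪f i, wbar (yF i)⟫ / (∑ s, Real.exp ⟪f i, wbar s⟫) :=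
    div_le_div_of_nonneg_left (le_of_lt (Real.exp_pos _)) hden_pos hden_le
  calc α' i * (z:ℝ) * Real.exp X ≤ _ := step1
    _ ≤ _ := step2
    _ ≤ _ := step3
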